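/- Let P : ℂⁿ → ℝ be a continuous function with P(0) = 0, set M_P := {(z,w) ∈ ℂⁿ × ℂ : Re(w) + P(z) < 0}, and let 𝒰 := {(z,w) ∈ ℂⁿ × ℂ : Re(w) + |z₁|² + ⋯ + |zₙ|² < 0} be the Siegel half-space. Suppose ψ : M_P → 𝒰 is a biholomorphic map. Then there exists t₀ ∈ ℝ such that liminf_{x→0, x<0} ‖ψ(0,…,0, x + it₀)‖ < +∞; that is, there exist a real number t₀ and a sequence of negative reals x_k → 0 such that the sequence {ψ(0,…,0, x_k + it₀)} is bounded in ℂ^{n+1}. -/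

import Mathlib

open Set Filter MeasureTheory Complex
open scoped Interval

noncomputable section Stmt11Aux

/-- Rectangle contour sum. -/
def RS11 (f : ℂ → ℂ) (x₁ x₂ t t' : ℝ) : ℂ :=
  ((∫ s in x₁..x₂, f (s + t*I)) - ∫ s in x₁..x₂, f (s + t'*I))
    + I*(∫ y in t..t', f (x₂ + y*I)) - I*(∫ y in t..t', f (x₁ + y*I))

lemma coordre11 (x t : ℝ) : ((x:ℂ) + (t:ℂ)*I).re = x := by simp

lemma coordim11 (x t : ℝ) : ((x:ℂ) + (t:ℂ)*I).im = t := by simp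

lemma RS11_eq_zero {f : ℂ → ℂ} {x₁ x₂ t t' : ℝ}
    (h : DifferentiableOn ℂ f (Set.uIcc x₁ x₂ ×ℂ Set.uIcc t t')) :
    RS11 f x₁ x₂ t t' = 0 := by
  have := Complex.integral_boundary_rect_eq_zero_of_differentiableOn f
    ((x₁:ℂ) + (t:ℂ)*I) ((x₂:ℂ) + (t':ℂ)*I)
    (by simpa [coordre11, coordim11] using h)
  simpa [RS11, coordre11, coordim11, smul_eq_mul] using this

/-- conj commutes with interval integrals. -/
lemma intervalIntegral_conj11 {f : ℝ → ℂ} {a b : ℝ} :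
    (∫ x in a..b, (starRingEnd ℂ) (f x)) = (starRingEnd ℂ) (∫ x in a..b, f x) := by
  rw [intervalIntegral, intervalIntegral, integral_conj, integral_conj, map_sub]

/-- The key "primitive" lemma: if Φ has the right horizontal and vertical increments
given by integrals of a function continuous on an open set O, then Φ is differentiable. -/
lemma core11 {O : Set ℂ} (hO : IsOpen O) (Φ f : ℂ → ℂ)
    (hf : ∀ w ∈ O, ContinuousAt f w)
    (hH : ∀ w ∈ O, ∀ x' : ℝ, (∀ s ∈ Set.uIcc w.re x', ((s:ℂ) + (w.im:ℂ)*I) ∈ O) →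
        Φ ((x':ℂ) + (w.im:ℂ)*I) - Φ w = ∫ s in w.re..x', f ((s:ℂ) + (w.im:ℂ)*I))
    (hV : ∀ w ∈ O, ∀ t' : ℝ, (∀ τ ∈ Set.uIcc w.im t', ((w.re:ℂ) + (τ:ℂ)*I) ∈ O) →
        Φ ((w.re:ℂ) + (t':ℂ)*I) - Φ w = I * ∫ τ in w.im..t', f ((w.re:ℂ) + (τ:ℂ)*I))
    {w : ℂ} (hw : w ∈ O) : HasDerivAt Φ (f w) w := by
  rw [hasDerivAt_iff_isLittleO, Asymptotics.isLittleO_iff]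
  intro c hc
  obtain ⟨δ₁, hδ₁pos, hball⟩ := Metric.isOpen_iff.1 hO w hw
  obtain ⟨δ₂, hδ₂pos, hcont⟩ := Metric.continuousAt_iff.1 (hf w hw) (c/2) (by positivity)
  set δ := min δ₁ δ₂ with hδ
  have hδpos : 0 < δ := lt_min hδ₁pos hδ₂pos
  filter_upwards [Metric.ball_mem_nhds w (by positivity : 0 < δ/2)] with z hz
  have hzw : dist z w < δ/2 := hz
  have habs : ‖z - w‖ < δ/2 := by
    rwa [Complex.dist_eq] at hzw
  -- distances of real/imaginary parts
  have hre : |z.re - w.re| ≤ ‖z - w‖ := by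
    simpa using Complex.abs_re_le_norm (z - w)
  have him : |z.im - w.im| ≤ ‖z - w‖ := by
    simpa using Complex.abs_im_le_norm (z - w)
  -- membership of the horizontal segment
  have hseg1 : ∀ s ∈ Set.uIcc w.re z.re, ((s:ℂ) + (w.im:ℂ)*I) ∈ O := by
    intro s hs
    apply hball
    have h1 : ((s:ℂ) + (w.im:ℂ)*I) - w = ((s - w.re : ℝ) : ℂ) := by
      apply Complex.ext <;> simp
    have : ‖((s:ℂ) + (w.im:ℂ)*I) - w‖ = |s - w.re| := by
      rw [h1, Complex.norm_real, Real.norm_eq_abs]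
    rw [Metric.mem_ball, Complex.dist_eq, this]
    calc |s - w.re| ≤ |z.re - w.re| := abs_sub_left_of_mem_uIcc hs
      _ ≤ ‖z - w‖ := hre
      _ < δ := lt_of_lt_of_le habs (by linarith)
      _ ≤ δ₁ := min_le_left _ _
  have hp : ((z.re:ℂ) + (w.im:ℂ)*I) ∈ O :=
    hseg1 z.re (Set.right_mem_uIcc)
  -- membership of the vertical segment
  have hseg2 : ∀ τ ∈ Set.uIcc w.im z.im, ((z.re:ℂ) + (τ:ℂ)*I) ∈ O := by
    intro τ hτ
    apply hball
    have h1 : ((z.re:ℂ) + (τ:ℂ)*I) - w = ((z.re - w.re : ℝ) : ℂ) + ((τ - w.im : ℝ) : ℂ)*I := by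
      apply Complex.ext <;> simp
    rw [Metric.mem_ball, Complex.dist_eq, h1]
    calc ‖((z.re - w.re : ℝ) : ℂ) + ((τ - w.im : ℝ) : ℂ)*I‖
        ≤ ‖((z.re - w.re : ℝ) : ℂ)‖ + ‖((τ - w.im : ℝ) : ℂ)*I‖ :=
          norm_add_le _ _
      _ = |z.re - w.re| + |τ - w.im| := by
          rw [norm_mul, Complex.norm_I, mul_one, Complex.norm_real, Complex.norm_real, Real.norm_eq_abs,
            Real.norm_eq_abs]
      _ ≤ ‖z - w‖ + |z.im - w.im| := by
          have := abs_sub_left_of_mem_uIcc hτ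
          have h2 : |τ - w.im| ≤ |z.im - w.im| := this
          linarith
      _ ≤ ‖z - w‖ + ‖z - w‖ := by linarith
      _ < δ := by linarith
      _ ≤ δ₁ := min_le_left _ _
  -- the two increment identities
  have hA1 := hH w hw z.re hseg1
  have hA2' := hV ((z.re:ℂ) + (w.im:ℂ)*I) hp z.im (by
    intro τ hτ
    have h1 : (((z.re:ℂ) + (w.im:ℂ)*I).re : ℂ) = (z.re : ℂ) := by
      norm_cast; exact coordre11 _ _
    rw [h1]
    exact hseg2 τ (by rwa [coordim11] at hτ))
  rw [coordre11, coordim11] at hA2'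
  -- continuity bounds on the segments
  have hbound1 : ∀ s ∈ Ι w.re z.re, ‖f ((s:ℂ) + (w.im:ℂ)*I) - f w‖ ≤ c/2 := by
    intro s hs
    have hs' : s ∈ Set.uIcc w.re z.re := Set.uIoc_subset_uIcc hs
    have hd : dist ((s:ℂ) + (w.im:ℂ)*I) w < δ₂ := by
      have h1 : ((s:ℂ) + (w.im:ℂ)*I) - w = ((s - w.re : ℝ) : ℂ) := by
        apply Complex.ext <;> simp
      rw [Complex.dist_eq, h1, Complex.norm_real, Real.norm_eq_abs]
      calc |s - w.re| ≤ |z.re - w.re| := abs_sub_left_of_mem_uIcc hs'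
        _ ≤ ‖z - w‖ := hre
        _ < δ := lt_of_lt_of_le habs (by linarith)
        _ ≤ δ₂ := min_le_right _ _
    have := hcont hd
    rw [dist_eq_norm] at this
    linarith
  have hbound2 : ∀ τ ∈ Ι w.im z.im, ‖f ((z.re:ℂ) + (τ:ℂ)*I) - f w‖ ≤ c/2 := by
    intro τ hτ
    have hτ' : τ ∈ Set.uIcc w.im z.im := Set.uIoc_subset_uIcc hτ
    have hd : dist ((z.re:ℂ) + (τ:ℂ)*I) w < δ₂ := by
      have h1 : ((z.re:ℂ) + (τ:ℂ)*I) - w = ((z.re - w.re : ℝ) : ℂ) + ((τ - w.im : ℝ) : ℂ)*I := by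
        apply Complex.ext <;> simp
      rw [Complex.dist_eq, h1]
      calc ‖((z.re - w.re : ℝ) : ℂ) + ((τ - w.im : ℝ) : ℂ)*I‖
          ≤ ‖((z.re - w.re : ℝ) : ℂ)‖ + ‖((τ - w.im : ℝ) : ℂ)*I‖ :=
            norm_add_le _ _
        _ = |z.re - w.re| + |τ - w.im| := by
            rw [norm_mul, Complex.norm_I, mul_one, Complex.norm_real, Complex.norm_real, Real.norm_eq_abs,
            Real.norm_eq_abs]
        _ ≤ ‖z - w‖ + |z.im - w.im| := by
            have h2 : |τ - w.im| ≤ |z.im - w.im| := abs_sub_left_of_mem_uIcc hτ'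
            linarith
        _ ≤ ‖z - w‖ + ‖z - w‖ := by linarith
        _ < δ := by linarith
        _ ≤ δ₂ := min_le_right _ _
    have := hcont hd
    rw [dist_eq_norm] at this
    linarith
  -- interval integrability of f on the segments
  have hint1 : IntervalIntegrable (fun s : ℝ => f ((s:ℂ) + (w.im:ℂ)*I)) volume w.re z.re := by
    apply ContinuousOn.intervalIntegrable
    intro s hs
    have h2 : ContinuousAt (fun s : ℝ => (s:ℂ) + (w.im:ℂ)*I) s := by fun_prop
    have h3 := ContinuousAt.comp (g := f) (f := fun s : ℝ => (s:ℂ) + (w.im:ℂ)*I) (x := s) (hf _ (hseg1 s hs)) h2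
    exact h3.continuousWithinAt
  have hint2 : IntervalIntegrable (fun τ : ℝ => f ((z.re:ℂ) + (τ:ℂ)*I)) volume w.im z.im := by
    apply ContinuousOn.intervalIntegrable
    intro τ hτ
    have h2 : ContinuousAt (fun τ : ℝ => (z.re:ℂ) + (τ:ℂ)*I) τ := by fun_prop
    have h3 := ContinuousAt.comp (g := f) (f := fun τ : ℝ => (z.re:ℂ) + (τ:ℂ)*I) (x := τ) (hf _ (hseg2 τ hτ)) h2
    exact h3.continuousWithinAt
  -- main decomposition
  have hdecomp : Φ z - Φ w - (z - w) • f w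
      = (∫ s in w.re..z.re, (f ((s:ℂ) + (w.im:ℂ)*I) - f w))
        + I * (∫ τ in w.im..z.im, (f ((z.re:ℂ) + (τ:ℂ)*I) - f w)) := by
    have e1 : (∫ s in w.re..z.re, (f ((s:ℂ) + (w.im:ℂ)*I) - f w))
        = (∫ s in w.re..z.re, f ((s:ℂ) + (w.im:ℂ)*I)) - ((z.re - w.re : ℝ) : ℂ) * f w := by
      rw [intervalIntegral.integral_sub hint1 intervalIntegrable_const,
        intervalIntegral.integral_const, Complex.real_smul]
      try push_cast
      try ring
    have e2 : (∫ τ in w.im..z.im, (f ((z.re:ℂ) + (τ:ℂ)*I) - f w))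
        = (∫ τ in w.im..z.im, f ((z.re:ℂ) + (τ:ℂ)*I)) - ((z.im - w.im : ℝ) : ℂ) * f w := by
      rw [intervalIntegral.integral_sub hint2 intervalIntegrable_const,
        intervalIntegral.integral_const, Complex.real_smul]
      try push_cast
      try ring
    have hzdec : z - w = ((z.re - w.re : ℝ) : ℂ) + ((z.im - w.im : ℝ) : ℂ)*I := by
      apply Complex.ext <;> simp
    have hΦz : Φ z = Φ ((z.re:ℂ) + (z.im:ℂ)*I) := by rw [Complex.re_add_im]
    rw [e1, e2, smul_eq_mul, hzdec]
    rw [hΦz]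
    linear_combination hA1 + hA2'
  rw [hdecomp]
  have hn1 : ‖∫ s in w.re..z.re, (f ((s:ℂ) + (w.im:ℂ)*I) - f w)‖ ≤ (c/2) * |z.re - w.re| :=
    intervalIntegral.norm_integral_le_of_norm_le_const hbound1
  have hn2 : ‖∫ τ in w.im..z.im, (f ((z.re:ℂ) + (τ:ℂ)*I) - f w)‖ ≤ (c/2) * |z.im - w.im| :=
    intervalIntegral.norm_integral_le_of_norm_le_const hbound2
  have hnorm : ‖z - w‖ = ‖z - w‖ := rfl
  calc ‖(∫ s in w.re..z.re, (f ((s:ℂ) + (w.im:ℂ)*I) - f w))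
        + I * (∫ τ in w.im..z.im, (f ((z.re:ℂ) + (τ:ℂ)*I) - f w))‖
      ≤ ‖∫ s in w.re..z.re, (f ((s:ℂ) + (w.im:ℂ)*I) - f w)‖
        + ‖I * (∫ τ in w.im..z.im, (f ((z.re:ℂ) + (τ:ℂ)*I) - f w))‖ := norm_add_le _ _
    _ = ‖∫ s in w.re..z.re, (f ((s:ℂ) + (w.im:ℂ)*I) - f w)‖
        + ‖∫ τ in w.im..z.im, (f ((z.re:ℂ) + (τ:ℂ)*I) - f w)‖ := by
          rw [norm_mul, Complex.norm_I, one_mul]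
    _ ≤ (c/2) * |z.re - w.re| + (c/2) * |z.im - w.im| := by linarith
    _ ≤ (c/2) * ‖z - w‖ + (c/2) * ‖z - w‖ := by
          rw [hnorm]
          have hc2 : (0:ℝ) ≤ c/2 := by positivity
          have := mul_le_mul_of_nonneg_left hre hc2
          have := mul_le_mul_of_nonneg_left him hc2
          linarith
    _ = c * ‖z - w‖ := by ring

end Stmt11Aux

section Main

variable (q : ℂ → ℂ)

noncomputable def B11 : ℂ → ℂ := fun w => ∫ s in w.re..(0:ℝ), q ((s:ℂ) + (w.im:ℂ)*I)

variable (hq1 : ∀ w, ‖q w‖ ≤ 2)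
  (hq2 : DifferentiableOn ℂ q {w : ℂ | w.re < 0})
  (hq2' : ∀ w : ℂ, ¬ w.re < 0 → q w = 0)
  (hq3 : ∀ t : ℝ, Tendsto (fun x : ℝ => q ((x:ℂ) + (t:ℂ)*I)) (nhdsWithin 0 (Iio 0)) (nhds 0))

lemma hopen11 : IsOpen {w : ℂ | w.re < 0} := by
  exact isOpen_lt Complex.continuous_re continuous_const

include hq2 in
lemma qcont11 : ∀ w : ℂ, w.re < 0 → ContinuousAt q w := by
  intro w hw
  exact (hq2.differentiableAt (hopen11.mem_nhds hw)).continuousAt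

include hq1 hq2 hq2' in
lemma qint11 : ∀ (t a b : ℝ), IntervalIntegrable (fun s => q ((s:ℂ) + (t:ℂ)*I)) volume a b := by
  intro t a b
  rw [intervalIntegrable_iff]
  have hsub : Ι a b ⊆ (Ι a b ∩ Iio 0) ∪ (Ι a b ∩ Ici 0) := by
    intro s hs
    rcases lt_or_ge s 0 with h|h
    · exact Or.inl ⟨hs, h⟩
    · exact Or.inr ⟨hs, h⟩
  apply IntegrableOn.mono_set _ hsub
  apply IntegrableOn.union
  · -- on the negative part: continuous and bounded
    have hmeas : MeasurableSet (Ι a b ∩ Iio 0) :=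
      measurableSet_uIoc.inter measurableSet_Iio
    have hcont : ContinuousOn (fun s : ℝ => q ((s:ℂ) + (t:ℂ)*I)) (Ι a b ∩ Iio 0) := by
      intro s hs
      have h2 : ContinuousAt (fun s : ℝ => (s:ℂ) + (t:ℂ)*I) s := by fun_prop
      have h1 : ((s:ℂ) + (t:ℂ)*I).re < 0 := by rw [coordre11]; exact hs.2
      have h3 := ContinuousAt.comp (g := q) (f := fun s : ℝ => (s:ℂ) + (t:ℂ)*I) (x := s)
        (qcont11 q hq2 _ h1) h2
      exact h3.continuousWithinAt
    apply Integrable.mono' (g := fun _ : ℝ => (2:ℝ))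
    · exact integrableOn_const (lt_of_le_of_lt (measure_mono inter_subset_left)
        measure_Ioc_lt_top).ne
    · exact hcont.aestronglyMeasurable hmeas
    · exact Eventually.of_forall fun s => hq1 _
  · -- on the nonnegative part the function vanishes
    have hmeas : MeasurableSet (Ι a b ∩ Ici 0) :=
      measurableSet_uIoc.inter measurableSet_Ici
    have : EqOn (fun s : ℝ => q ((s:ℂ) + (t:ℂ)*I)) (fun _ => (0:ℂ)) (Ι a b ∩ Ici 0) := by
      intro s hs
      have : ¬ ((s:ℂ) + (t:ℂ)*I).re < 0 := by rw [coordre11]; exact not_lt.2 hs.2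
      exact hq2' _ this
    exact (integrableOn_congr_fun this hmeas).2 (integrableOn_zero)

include hq1 in
lemma Bbound11 : ∀ w : ℂ, ‖B11 q w‖ ≤ 2*|w.re| := by
  intro w
  have := intervalIntegral.norm_integral_le_of_norm_le_const (C := 2)
    (f := fun s : ℝ => q ((s:ℂ) + (w.im:ℂ)*I)) (a := w.re) (b := 0)
    (fun s _ => hq1 _)
  simpa [B11, abs_sub_comm] using this

include hq2' in
lemma Bzero11 : ∀ w : ℂ, 0 ≤ w.re → B11 q w = 0 := by
  intro w hw
  have : EqOn (fun s : ℝ => q ((s:ℂ) + (w.im:ℂ)*I)) (fun _ => (0:ℂ)) (Set.uIcc w.re 0) := by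
    intro s hs
    have hs0 : 0 ≤ s := by
      rcases Set.mem_uIcc.1 hs with ⟨h1,h2⟩|⟨h1,h2⟩
      · linarith
      · exact h1
    have : ¬ ((s:ℂ) + (w.im:ℂ)*I).re < 0 := by rw [coordre11]; exact not_lt.2 hs0
    exact hq2' _ this
  rw [B11]
  rw [intervalIntegral.integral_congr this]
  simp

lemma Bcoord11 (x t : ℝ) : B11 q ((x:ℂ) + (t:ℂ)*I) = ∫ s in x..(0:ℝ), q ((s:ℂ) + (t:ℂ)*I) := by
  simp [B11, coordre11, coordim11]

include hq1 hq2 hq2' in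
lemma Bhor11 : ∀ (a b t : ℝ), (∫ s in a..b, q ((s:ℂ) + (t:ℂ)*I))
    = B11 q ((a:ℂ) + (t:ℂ)*I) - B11 q ((b:ℂ) + (t:ℂ)*I) := by
  intro a b t
  rw [Bcoord11, Bcoord11, eq_sub_iff_add_eq, eq_comm]
  exact (intervalIntegral.integral_add_adjacent_intervals (qint11 q hq1 hq2 hq2' t a b)
    (qint11 q hq1 hq2 hq2' t b 0)).symm

lemma useq11 (x : ℝ) (hx : x < 0) :
    (∀ k : ℕ, x < x/(k+2) ∧ x/(k+2) < 0) ∧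
      Tendsto (fun k : ℕ => x/(k+2)) atTop (nhdsWithin 0 (Iio 0)) := by
  have hpos : ∀ k : ℕ, (0:ℝ) < (k:ℝ)+2 := fun k => by positivity
  constructor
  · intro k
    constructor
    · rw [lt_div_iff₀ (hpos k)]; nlinarith [hpos k]
    · exact div_neg_of_neg_of_pos hx (hpos k)
  · refine tendsto_nhdsWithin_of_tendsto_nhds_of_eventually_within _ ?_
      (Eventually.of_forall fun k => div_neg_of_neg_of_pos hx (hpos k))
    exact Tendsto.div_atTop tendsto_const_nhds
      (tendsto_atTop_add_const_right _ 2 (tendsto_natCast_atTop_atTop))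

include hq1 hq2 hq2' hq3 in
lemma mlim11 : ∀ (t t' x : ℝ), x < 0 →
    Tendsto (fun k : ℕ => ∫ y in t..t', q ((↑(x/(k+2)) : ℂ) + (y:ℂ)*I)) atTop (nhds 0) := by
  intro t t' x hx
  obtain ⟨hu, hutend⟩ := useq11 x hx
  have hJ : Tendsto (fun k : ℕ => ∫ y in Ι t t', q ((↑(x/(k+2)):ℂ) + (y:ℂ)*I) ∂volume)
      atTop (nhds 0) := by
    have h0 : (nhds (0:ℂ)) = nhds (∫ y in Ι t t', (0:ℂ) ∂volume) := by simp
    rw [h0]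
    apply MeasureTheory.tendsto_integral_filter_of_dominated_convergence (bound := fun _ => (2:ℝ))
    · apply Eventually.of_forall; intro k
      apply Continuous.aestronglyMeasurable
      rw [continuous_iff_continuousAt]; intro y
      have h2 : ContinuousAt (fun y : ℝ => (↑(x/(k+2)):ℂ) + (y:ℂ)*I) y := by fun_prop
      have h1 : ((↑(x/(k+2)):ℂ) + (y:ℂ)*I).re < 0 := by rw [coordre11]; exact (hu k).2
      exact ContinuousAt.comp (g := q) (f := fun y : ℝ => (↑(x/(k+2)):ℂ) + (y:ℂ)*I) (x := y)
        (qcont11 q hq2 _ h1) h2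
    · exact Eventually.of_forall fun k => ae_of_all _ fun y => hq1 _
    · exact integrableOn_const measure_Ioc_lt_top.ne
    · exact ae_of_all _ fun y => (hq3 y).comp hutend
  have heq : (fun k : ℕ => ∫ y in t..t', q ((↑(x/(k+2)):ℂ) + (y:ℂ)*I))
      = fun k : ℕ => (if t ≤ t' then (1:ℝ) else -1) • ∫ y in Ι t t', q ((↑(x/(k+2)):ℂ) + (y:ℂ)*I) ∂volume := by
    funext k; rw [intervalIntegral.intervalIntegral_eq_integral_uIoc]
  rw [heq]
  simpa using hJ.const_smul (if t ≤ t' then (1:ℝ) else -1)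


include hq1 hq2 hq2' hq3 in
lemma Bvert11 : ∀ (x t t' : ℝ), x < 0 →
    B11 q ((x:ℂ) + (t':ℂ)*I) - B11 q ((x:ℂ) + (t:ℂ)*I)
      = -(I * ∫ y in t..t', q ((x:ℂ) + (y:ℂ)*I)) := by
  intro x t t' hx
  obtain ⟨hu, hutend⟩ := useq11 x hx
  have key : ∀ k : ℕ,
      (B11 q ((x:ℂ) + (t:ℂ)*I) - B11 q ((↑(x/(k+2)):ℂ) + (t:ℂ)*I))
        - (B11 q ((x:ℂ) + (t':ℂ)*I) - B11 q ((↑(x/(k+2)):ℂ) + (t':ℂ)*I))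
        + I*(∫ y in t..t', q ((↑(x/(k+2)):ℂ) + (y:ℂ)*I))
        - I*(∫ y in t..t', q ((x:ℂ) + (y:ℂ)*I)) = 0 := by
    intro k
    have hsubset : (Set.uIcc x (x/(k+2)) ×ℂ Set.uIcc t t') ⊆ {w : ℂ | w.re < 0} := by
      intro z hz
      rw [Complex.mem_reProdIm] at hz
      have h1 : z.re ≤ max x (x/(k+2)) := by
        have := hz.1; rw [Set.uIcc] at this; exact this.2
      have h2 : max x (x/(k+2)) < 0 := max_lt hx (hu k).2
      exact lt_of_le_of_lt h1 h2
    have hg : RS11 q x (x/(k+2)) t t' = 0 := RS11_eq_zero (hq2.mono hsubset)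
    rw [RS11, Bhor11 q hq1 hq2 hq2' x (x/(k+2)) t, Bhor11 q hq1 hq2 hq2' x (x/(k+2)) t'] at hg
    linear_combination hg
  have hu0 : Tendsto (fun k : ℕ => x/(k+2)) atTop (nhds 0) := hutend.mono_right nhdsWithin_le_nhds
  have habs0 : Tendsto (fun k : ℕ => 2*|x/(k+2)|) atTop (nhds 0) := by
    have := ((_root_.continuous_abs.tendsto 0).comp hu0)
    simpa using this.const_mul (2:ℝ)
  have hBb : ∀ (k:ℕ) (b:ℝ), ‖B11 q ((↑(x/(k+2)):ℂ) + (b:ℂ)*I)‖ ≤ 2*|x/(k+2)| := by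
    intro k b
    have hb := Bbound11 q hq1 ((↑(x/(k+2)):ℂ) + (b:ℂ)*I)
    rwa [coordre11] at hb
  have hB1 : Tendsto (fun k : ℕ => B11 q ((↑(x/(k+2)):ℂ) + (t:ℂ)*I)) atTop (nhds 0) :=
    squeeze_zero_norm (fun k => hBb k t) habs0
  have hB2 : Tendsto (fun k : ℕ => B11 q ((↑(x/(k+2)):ℂ) + (t':ℂ)*I)) atTop (nhds 0) :=
    squeeze_zero_norm (fun k => hBb k t') habs0
  have hm := mlim11 q hq1 hq2 hq2' hq3 t t' x hx
  have T : Tendsto (fun k : ℕ =>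
      (B11 q ((x:ℂ) + (t:ℂ)*I) - B11 q ((↑(x/(k+2)):ℂ) + (t:ℂ)*I))
        - (B11 q ((x:ℂ) + (t':ℂ)*I) - B11 q ((↑(x/(k+2)):ℂ) + (t':ℂ)*I))
        + I*(∫ y in t..t', q ((↑(x/(k+2)):ℂ) + (y:ℂ)*I))
        - I*(∫ y in t..t', q ((x:ℂ) + (y:ℂ)*I))) atTop
      (nhds ((B11 q ((x:ℂ) + (t:ℂ)*I) - 0) - (B11 q ((x:ℂ) + (t':ℂ)*I) - 0) + I*0
        - I*(∫ y in t..t', q ((x:ℂ) + (y:ℂ)*I)))) := by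
    exact (((tendsto_const_nhds.sub hB1).sub (tendsto_const_nhds.sub hB2)).add
      (tendsto_const_nhds.mul hm)).sub tendsto_const_nhds
  have T0 : Tendsto (fun _ : ℕ => (0:ℂ)) atTop (nhds 0) := tendsto_const_nhds
  have heq := tendsto_nhds_unique T (by
    have : (fun k : ℕ =>
      (B11 q ((x:ℂ) + (t:ℂ)*I) - B11 q ((↑(x/(k+2)):ℂ) + (t:ℂ)*I))
        - (B11 q ((x:ℂ) + (t':ℂ)*I) - B11 q ((↑(x/(k+2)):ℂ) + (t':ℂ)*I))
        + I*(∫ y in t..t', q ((↑(x/(k+2)):ℂ) + (y:ℂ)*I))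
        - I*(∫ y in t..t', q ((x:ℂ) + (y:ℂ)*I))) = fun _ : ℕ => (0:ℂ) := funext key
    rw [this]
    exact T0)
  linear_combination (-1 : ℂ) * heq

include hq1 hq2 hq2' hq3 in
lemma BhasDeriv11 : ∀ w : ℂ, w.re < 0 → HasDerivAt (B11 q) (-(q w)) w := by
  intro w hw
  apply core11 (O := {w : ℂ | w.re < 0}) hopen11 (B11 q) (fun z => -(q z)) ?_ ?_ ?_ hw
  · intro z hz
    exact (qcont11 q hq2 z hz).neg
  · intro z hz x' _
    have h1 := Bhor11 q hq1 hq2 hq2' z.re x' z.im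
    rw [Complex.re_add_im] at h1
    rw [intervalIntegral.integral_neg]
    linear_combination h1
  · intro z hz t' _
    have h2 := Bvert11 q hq1 hq2 hq2' hq3 z.re z.im t' hz
    rw [Complex.re_add_im] at h2
    rw [intervalIntegral.integral_neg]
    linear_combination h2

include hq1 hq2 hq2' hq3 in
lemma Bcont11 : Continuous (B11 q) := by
  rw [continuous_iff_continuousAt]; intro w
  rcases lt_trichotomy w.re 0 with h|h|h
  · exact (BhasDeriv11 q hq1 hq2 hq2' hq3 w h).continuousAt
  · have hB0 : B11 q w = 0 := Bzero11 q hq2' w (le_of_eq h.symm)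
    rw [Metric.continuousAt_iff]
    intro ε hε
    refine ⟨ε/4, by positivity, fun {z} hz => ?_⟩
    have h1 : |z.re - w.re| ≤ dist z w := by
      rw [Complex.dist_eq]; simpa using Complex.abs_re_le_norm (z - w)
    have h2 : |z.re| ≤ dist z w := by rw [← sub_zero z.re, ← h]; exact h1
    have h3 : dist (B11 q z) (B11 q w) = ‖B11 q z‖ := by
      rw [hB0, dist_eq_norm, sub_zero]
    have h4 := Bbound11 q hq1 z
    rw [h3]
    linarith
  · apply ContinuousAt.congr (f := fun _ : ℂ => (0:ℂ)) continuousAt_const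
    filter_upwards [IsOpen.mem_nhds (isOpen_lt continuous_const Complex.continuous_re) h]
      with z hz
    exact (Bzero11 q hq2' z (le_of_lt hz)).symm

include hq1 hq2 hq2' hq3 in
lemma Bint11 : ∀ (b a c : ℝ), IntervalIntegrable (fun s : ℝ => B11 q ((s:ℂ) + (b:ℂ)*I)) volume a c := by
  intro b a c
  exact ((Bcont11 q hq1 hq2 hq2' hq3).comp (by fun_prop)).intervalIntegrable a c

include hq1 hq2 hq2' hq3 in
lemma BdiffOn11 : DifferentiableOn ℂ (B11 q) {w : ℂ | w.re < 0} :=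
  fun w hw => (BhasDeriv11 q hq1 hq2 hq2' hq3 w hw).differentiableAt.differentiableWithinAt

include hq1 hq2 hq2' hq3 in
lemma L0_11 : ∀ (x₁ t t' : ℝ), x₁ ≤ 0 → RS11 (B11 q) x₁ 0 t t' = 0 := by
  intro x₁ t t' hx₁
  rcases eq_or_lt_of_le hx₁ with heq|hlt
  · rw [heq]; simp [RS11]
  · obtain ⟨hu, hutend⟩ := useq11 x₁ hlt
    have hu0 : Tendsto (fun k : ℕ => x₁/(k+2)) atTop (nhds 0) := hutend.mono_right nhdsWithin_le_nhds
    have habsu : Tendsto (fun k : ℕ => |x₁/(k+2)|) atTop (nhds 0) := by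
      simpa [Function.comp_def] using ((_root_.continuous_abs.tendsto 0).comp hu0)
    have hsplit : ∀ (k : ℕ) (b : ℝ), (∫ s in x₁..(x₁/(k+2)), B11 q ((s:ℂ) + (b:ℂ)*I))
        = (∫ s in x₁..(0:ℝ), B11 q ((s:ℂ) + (b:ℂ)*I))
          - ∫ s in (x₁/(k+2))..(0:ℝ), B11 q ((s:ℂ) + (b:ℂ)*I) := fun k b =>
      eq_sub_of_add_eq (intervalIntegral.integral_add_adjacent_intervals
        (Bint11 q hq1 hq2 hq2' hq3 b x₁ (x₁/(k+2))) (Bint11 q hq1 hq2 hq2' hq3 b (x₁/(k+2)) 0))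
    -- tail integrals tend to zero
    have htail : ∀ b : ℝ, Tendsto (fun k : ℕ => ∫ s in (x₁/(k+2))..(0:ℝ), B11 q ((s:ℂ) + (b:ℂ)*I))
        atTop (nhds 0) := by
      intro b
      apply squeeze_zero_norm (a := fun k : ℕ => (2*|x₁/(k+2)|) * |0 - x₁/(k+2)|)
      · intro k
        apply intervalIntegral.norm_integral_le_of_norm_le_const
        intro s hs
        rw [Set.uIoc_of_le (le_of_lt (hu k).2)] at hs
        have h1 : |s| ≤ |x₁/(k+2)| := by
          rw [abs_of_neg (hu k).2, abs_of_nonpos hs.2]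
          linarith [hs.1]
        have h2 := Bbound11 q hq1 ((s:ℂ) + (b:ℂ)*I)
        rw [coordre11] at h2
        linarith
      · have := (habsu.const_mul (2:ℝ)).mul (by simpa using habsu :
          Tendsto (fun k : ℕ => |0 - x₁/(k+2)|) atTop (nhds 0))
        simpa using this
    -- vertical integrals at the moving edge tend to zero
    have hvert : Tendsto (fun k : ℕ => ∫ y in t..t', B11 q ((↑(x₁/(k+2)):ℂ) + (y:ℂ)*I))
        atTop (nhds 0) := by
      apply squeeze_zero_norm (a := fun k : ℕ => (2*|x₁/(k+2)|) * |t' - t|)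
      · intro k
        apply intervalIntegral.norm_integral_le_of_norm_le_const
        intro y hy
        have h2 := Bbound11 q hq1 ((↑(x₁/(k+2)):ℂ) + (y:ℂ)*I)
        rwa [coordre11] at h2
      · simpa using (habsu.const_mul (2:ℝ)).mul_const (|t' - t|)
    have key : ∀ k : ℕ, RS11 (B11 q) x₁ (x₁/(k+2)) t t' = 0 := by
      intro k
      apply RS11_eq_zero
      apply (BdiffOn11 q hq1 hq2 hq2' hq3).mono
      intro z hz
      rw [Complex.mem_reProdIm] at hz
      have h1 : z.re ≤ max x₁ (x₁/(k+2)) := by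
        have := hz.1; rw [Set.uIcc] at this; exact this.2
      exact lt_of_le_of_lt h1 (max_lt hlt (hu k).2)
    have key2 : ∀ k : ℕ,
        (((∫ s in x₁..(0:ℝ), B11 q ((s:ℂ) + (t:ℂ)*I)) - ∫ s in (x₁/(k+2))..(0:ℝ), B11 q ((s:ℂ) + (t:ℂ)*I))
          - ((∫ s in x₁..(0:ℝ), B11 q ((s:ℂ) + (t':ℂ)*I)) - ∫ s in (x₁/(k+2))..(0:ℝ), B11 q ((s:ℂ) + (t':ℂ)*I)))
          + I*(∫ y in t..t', B11 q ((↑(x₁/(k+2)):ℂ) + (y:ℂ)*I))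
          - I*(∫ y in t..t', B11 q ((x₁:ℂ) + (y:ℂ)*I)) = 0 := by
      intro k
      have hk := key k
      rw [RS11, hsplit k t, hsplit k t'] at hk
      linear_combination hk
    have T : Tendsto (fun k : ℕ =>
        (((∫ s in x₁..(0:ℝ), B11 q ((s:ℂ) + (t:ℂ)*I)) - ∫ s in (x₁/(k+2))..(0:ℝ), B11 q ((s:ℂ) + (t:ℂ)*I))
          - ((∫ s in x₁..(0:ℝ), B11 q ((s:ℂ) + (t':ℂ)*I)) - ∫ s in (x₁/(k+2))..(0:ℝ), B11 q ((s:ℂ) + (t':ℂ)*I)))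
          + I*(∫ y in t..t', B11 q ((↑(x₁/(k+2)):ℂ) + (y:ℂ)*I))
          - I*(∫ y in t..t', B11 q ((x₁:ℂ) + (y:ℂ)*I))) atTop
        (nhds ((((∫ s in x₁..(0:ℝ), B11 q ((s:ℂ) + (t:ℂ)*I)) - 0)
          - ((∫ s in x₁..(0:ℝ), B11 q ((s:ℂ) + (t':ℂ)*I)) - 0)) + I*0
          - I*(∫ y in t..t', B11 q ((x₁:ℂ) + (y:ℂ)*I)))) :=
      (((tendsto_const_nhds.sub (htail t)).sub (tendsto_const_nhds.sub (htail t'))).add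
        (tendsto_const_nhds.mul hvert)).sub tendsto_const_nhds
    have heq := tendsto_nhds_unique T (by
      rw [show (fun k : ℕ =>
        (((∫ s in x₁..(0:ℝ), B11 q ((s:ℂ) + (t:ℂ)*I)) - ∫ s in (x₁/(k+2))..(0:ℝ), B11 q ((s:ℂ) + (t:ℂ)*I))
          - ((∫ s in x₁..(0:ℝ), B11 q ((s:ℂ) + (t':ℂ)*I)) - ∫ s in (x₁/(k+2))..(0:ℝ), B11 q ((s:ℂ) + (t':ℂ)*I)))
          + I*(∫ y in t..t', B11 q ((↑(x₁/(k+2)):ℂ) + (y:ℂ)*I))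
          - I*(∫ y in t..t', B11 q ((x₁:ℂ) + (y:ℂ)*I))) = fun _ : ℕ => (0:ℂ) from funext key2]
      exact tendsto_const_nhds)
    have hV0 : (∫ y in t..t', B11 q ((↑(0:ℝ):ℂ) + (y:ℂ)*I)) = 0 := by
      rw [intervalIntegral.integral_congr (g := fun _ => (0:ℂ))]
      · simp
      · intro y hy
        apply Bzero11 q hq2'
        rw [coordre11]
    rw [RS11, hV0]
    linear_combination heq

include hq1 hq2 hq2' hq3 in
lemma L1_11 : ∀ (x₁ x₂ t t' : ℝ), x₁ ≤ 0 → x₂ ≤ 0 → RS11 (B11 q) x₁ x₂ t t' = 0 := by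
  intro x₁ x₂ t t' h1 h2
  have e1 := L0_11 q hq1 hq2 hq2' hq3 x₁ t t' h1
  have e2 := L0_11 q hq1 hq2 hq2' hq3 x₂ t t' h2
  have s1 := intervalIntegral.integral_add_adjacent_intervals
    (Bint11 q hq1 hq2 hq2' hq3 t x₁ x₂) (Bint11 q hq1 hq2 hq2' hq3 t x₂ 0)
  have s2 := intervalIntegral.integral_add_adjacent_intervals
    (Bint11 q hq1 hq2 hq2' hq3 t' x₁ x₂) (Bint11 q hq1 hq2 hq2' hq3 t' x₂ 0)
  rw [RS11] at e1 e2 ⊢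
  linear_combination e1 - e2 + s1 - s2

noncomputable def E11 : ℂ → ℂ := fun w =>
  if w.re < 0 then B11 q w else -(starRingEnd ℂ) (B11 q (-(starRingEnd ℂ) w))

include hq2' in
lemma hEB11 : ∀ w : ℂ, w.re ≤ 0 → E11 q w = B11 q w := by
  intro w hw
  rcases lt_or_eq_of_le hw with h|h
  · simp [E11, h]
  · have hb1 : B11 q w = 0 := Bzero11 q hq2' w (ge_of_eq h)
    have hb2 : B11 q (-(starRingEnd ℂ) w) = 0 := Bzero11 q hq2' _ (by simp [← h])
    simp [E11, not_lt.2 (le_of_eq h), hb1, hb2]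

lemma hERefl11 : ∀ w : ℂ, ¬ w.re < 0 → E11 q w = -(starRingEnd ℂ) (B11 q (-(starRingEnd ℂ) w)) := by
  intro w hw; simp [E11, hw]

include hq1 hq2' in
lemma hEbound11 : ∀ w : ℂ, ‖E11 q w‖ ≤ 2*|w.re| := by
  intro w
  by_cases h : w.re < 0
  · rw [show E11 q w = B11 q w from by simp [E11, h] ]
    exact Bbound11 q hq1 w
  · rw [hERefl11 q w h]
    calc ‖-(starRingEnd ℂ) (B11 q (-(starRingEnd ℂ) w))‖
        = ‖B11 q (-(starRingEnd ℂ) w)‖ := by rw [norm_neg, RCLike.norm_conj]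
      _ ≤ 2*|(-(starRingEnd ℂ) w).re| := Bbound11 q hq1 _
      _ = 2*|w.re| := by simp

include hq1 hq2 hq2' hq3 in
lemma hEcont11 : Continuous (E11 q) := by
  rw [continuous_iff_continuousAt]; intro w
  rcases lt_trichotomy w.re 0 with h|h|h
  · apply ContinuousAt.congr (f := B11 q) (Bcont11 q hq1 hq2 hq2' hq3).continuousAt
    filter_upwards [IsOpen.mem_nhds hopen11 h] with z hz
    exact (hEB11 q hq2' z (le_of_lt hz)).symm
  · have hE0 : E11 q w = 0 := by
      have := hEbound11 q hq1 hq2' w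
      rw [h] at this
      simpa using norm_le_zero_iff.1 (by simpa using this)
    rw [Metric.continuousAt_iff]
    intro ε hε
    refine ⟨ε/4, by positivity, fun {z} hz => ?_⟩
    have h1 : |z.re - w.re| ≤ dist z w := by
      rw [Complex.dist_eq]; simpa using Complex.abs_re_le_norm (z - w)
    have h2 : |z.re| ≤ dist z w := by rw [← sub_zero z.re, ← h]; exact h1
    have h3 : dist (E11 q z) (E11 q w) = ‖E11 q z‖ := by
      rw [hE0, dist_eq_norm, sub_zero]
    have h4 := hEbound11 q hq1 hq2' z
    rw [h3]
    linarith
  · have hc : Continuous fun z : ℂ => -(starRingEnd ℂ) (B11 q (-(starRingEnd ℂ) z)) :=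
      (Complex.continuous_conj.comp ((Bcont11 q hq1 hq2 hq2' hq3).comp
        Complex.continuous_conj.neg)).neg
    apply ContinuousAt.congr hc.continuousAt
    filter_upwards [IsOpen.mem_nhds (isOpen_lt continuous_const Complex.continuous_re) h] with z hz
    exact (hERefl11 q z (not_lt.2 (le_of_lt hz))).symm

include hq1 hq2 hq2' hq3 in
lemma hEint11 : ∀ (b a c : ℝ), IntervalIntegrable (fun s : ℝ => E11 q ((s:ℂ) + (b:ℂ)*I)) volume a c := by
  intro b a c
  exact ((hEcont11 q hq1 hq2 hq2' hq3).comp (by fun_prop)).intervalIntegrable a c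

include hq1 hq2 hq2' hq3 in
lemma hEvint11 : ∀ (a t t' : ℝ), IntervalIntegrable (fun y : ℝ => E11 q ((a:ℂ) + (y:ℂ)*I)) volume t t' := by
  intro a t t'
  exact ((hEcont11 q hq1 hq2 hq2' hq3).comp (by fun_prop)).intervalIntegrable t t'

include hq1 hq2 hq2' hq3 in
lemma ERSleft11 : ∀ (x₁ x₂ t t' : ℝ), x₁ ≤ 0 → x₂ ≤ 0 → RS11 (E11 q) x₁ x₂ t t' = 0 := by
  intro x₁ x₂ t t' h1 h2
  have hH : ∀ b : ℝ, (∫ s in x₁..x₂, E11 q ((s:ℂ)+(b:ℂ)*I))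
      = ∫ s in x₁..x₂, B11 q ((s:ℂ)+(b:ℂ)*I) := by
    intro b
    apply intervalIntegral.integral_congr
    intro s hs
    have hs0 : s ≤ 0 := by
      rcases Set.mem_uIcc.1 hs with ⟨ha,hb⟩|⟨ha,hb⟩
      · exact le_trans hb h2
      · exact le_trans hb h1
    exact hEB11 q hq2' _ (by rw [coordre11]; exact hs0)
  have hVf : ∀ a : ℝ, a ≤ 0 → (∫ y in t..t', E11 q ((a:ℂ)+(y:ℂ)*I))
      = ∫ y in t..t', B11 q ((a:ℂ)+(y:ℂ)*I) := by
    intro a ha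
    apply intervalIntegral.integral_congr
    intro y hy
    exact hEB11 q hq2' _ (by rw [coordre11]; exact ha)
  have hL := L1_11 q hq1 hq2 hq2' hq3 x₁ x₂ t t' h1 h2
  rw [RS11] at hL ⊢
  rw [hH t, hH t', hVf x₁ h1, hVf x₂ h2]
  exact hL

include hq1 hq2 hq2' hq3 in
lemma ERSright11 : ∀ (x₁ x₂ t t' : ℝ), 0 ≤ x₁ → 0 ≤ x₂ → RS11 (E11 q) x₁ x₂ t t' = 0 := by
  intro x₁ x₂ t t' h1 h2
  have hH : ∀ b : ℝ, (∫ s in x₁..x₂, E11 q ((s:ℂ)+(b:ℂ)*I))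
      = -(starRingEnd ℂ) (∫ s in (-x₂)..(-x₁), B11 q ((s:ℂ)+(b:ℂ)*I)) := by
    intro b
    have hc : EqOn (fun s : ℝ => E11 q ((s:ℂ)+(b:ℂ)*I))
        (fun s : ℝ => -(starRingEnd ℂ) (B11 q ((↑(-s):ℂ)+(b:ℂ)*I))) (Set.uIcc x₁ x₂) := by
      intro s hs
      have hs0 : 0 ≤ s := by
        rcases Set.mem_uIcc.1 hs with ⟨ha,hb⟩|⟨ha,hb⟩
        · exact le_trans h1 ha
        · exact le_trans h2 ha
      have h3 := hERefl11 q ((s:ℂ)+(b:ℂ)*I) (by rw [coordre11]; exact not_lt.2 hs0)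
      show E11 q ((s:ℂ)+(b:ℂ)*I) = -(starRingEnd ℂ) (B11 q ((↑(-s):ℂ)+(b:ℂ)*I))
      rw [h3]
      simp only [neg_inj]
      congr 2
      apply Complex.ext <;> simp
    rw [intervalIntegral.integral_congr hc, intervalIntegral.integral_neg, intervalIntegral_conj11,
      intervalIntegral.integral_comp_neg (fun s : ℝ => B11 q ((s:ℂ)+(b:ℂ)*I))]
  have hV : ∀ a : ℝ, 0 ≤ a → (∫ y in t..t', E11 q ((a:ℂ)+(y:ℂ)*I))
      = -(starRingEnd ℂ) (∫ y in t..t', B11 q ((↑(-a):ℂ)+(y:ℂ)*I)) := by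
    intro a ha
    have hc : EqOn (fun y : ℝ => E11 q ((a:ℂ)+(y:ℂ)*I))
        (fun y : ℝ => -(starRingEnd ℂ) (B11 q ((↑(-a):ℂ)+(y:ℂ)*I))) (Set.uIcc t t') := by
      intro y hy
      have h3 := hERefl11 q ((a:ℂ)+(y:ℂ)*I) (by rw [coordre11]; exact not_lt.2 ha)
      show E11 q ((a:ℂ)+(y:ℂ)*I) = -(starRingEnd ℂ) (B11 q ((↑(-a):ℂ)+(y:ℂ)*I))
      rw [h3]
      simp only [neg_inj]
      congr 2
      apply Complex.ext <;> simp
    rw [intervalIntegral.integral_congr hc, intervalIntegral.integral_neg, intervalIntegral_conj11]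
  have hc := congrArg (starRingEnd ℂ)
    (L1_11 q hq1 hq2 hq2' hq3 (-x₂) (-x₁) t t' (neg_nonpos.2 h2) (neg_nonpos.2 h1))
  rw [RS11] at hc
  simp only [map_sub, map_add, map_mul, map_zero, Complex.conj_I] at hc
  rw [RS11, hH t, hH t', hV x₁ h1, hV x₂ h2]
  linear_combination (-1:ℂ) * hc

include hq1 hq2 hq2' hq3 in
lemma ERS11 : ∀ (x₂ t t' : ℝ), RS11 (E11 q) (-1) x₂ t t' = 0 := by
  intro x₂ t t'
  rcases le_or_gt x₂ 0 with h|h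
  · exact ERSleft11 q hq1 hq2 hq2' hq3 (-1) x₂ t t' (by norm_num) h
  · have e1 := ERSleft11 q hq1 hq2 hq2' hq3 (-1) 0 t t' (by norm_num) (le_refl 0)
    have e2 := ERSright11 q hq1 hq2 hq2' hq3 0 x₂ t t' (le_refl 0) (le_of_lt h)
    have s1 := intervalIntegral.integral_add_adjacent_intervals
      (hEint11 q hq1 hq2 hq2' hq3 t (-1) 0) (hEint11 q hq1 hq2 hq2' hq3 t 0 x₂)
    have s2 := intervalIntegral.integral_add_adjacent_intervals
      (hEint11 q hq1 hq2 hq2' hq3 t' (-1) 0) (hEint11 q hq1 hq2 hq2' hq3 t' 0 x₂)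
    rw [RS11] at e1 e2 ⊢
    linear_combination e1 + e2 - s1 + s2

noncomputable def F11 : ℂ → ℂ := fun z =>
  (∫ s in (-1:ℝ)..z.re, E11 q ((s:ℂ) + (z.im:ℂ)*I))
    + I*(∫ y in (0:ℝ)..z.im, E11 q ((↑(-1:ℝ):ℂ) + (y:ℂ)*I))

lemma F11coord (x t : ℝ) : F11 q ((x:ℂ) + (t:ℂ)*I)
    = (∫ s in (-1:ℝ)..x, E11 q ((s:ℂ) + (t:ℂ)*I))
      + I*(∫ y in (0:ℝ)..t, E11 q ((↑(-1:ℝ):ℂ) + (y:ℂ)*I)) := by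
  simp only [F11, coordre11, coordim11]

include hq1 hq2 hq2' hq3 in
lemma FhasDeriv11 : ∀ z : ℂ, HasDerivAt (F11 q) (E11 q z) z := by
  intro z
  apply core11 (O := univ) isOpen_univ (F11 q) (E11 q)
    (fun w _ => (hEcont11 q hq1 hq2 hq2' hq3).continuousAt) ?_ ?_ (mem_univ z)
  · intro w _ x' _
    have h1 := F11coord q x' w.im
    have h2 := F11coord q w.re w.im
    rw [Complex.re_add_im] at h2
    rw [h1, h2]
    have s1 := intervalIntegral.integral_add_adjacent_intervals
      (hEint11 q hq1 hq2 hq2' hq3 w.im (-1) w.re) (hEint11 q hq1 hq2 hq2' hq3 w.im w.re x')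
    linear_combination -s1
  · intro w _ t' _
    have h1 := F11coord q w.re t'
    have h2 := F11coord q w.re w.im
    rw [Complex.re_add_im] at h2
    rw [h1, h2]
    have hers := ERS11 q hq1 hq2 hq2' hq3 w.re w.im t'
    rw [RS11] at hers
    have s3 := intervalIntegral.integral_add_adjacent_intervals
      (hEvint11 q hq1 hq2 hq2' hq3 (-1) 0 w.im) (hEvint11 q hq1 hq2 hq2' hq3 (-1) w.im t')
    linear_combination (-1:ℂ)*hers - I*s3

include hq1 hq2 hq2' hq3 in
lemma key11 : ∀ w : ℂ, w.re < 0 → q w = 0 := by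
  intro w hw
  have hcore := FhasDeriv11 q hq1 hq2 hq2' hq3
  have hFdiff : Differentiable ℂ (F11 q) := fun z => (hcore z).differentiableAt
  have han : AnalyticOnNhd ℂ (F11 q) univ := hFdiff.differentiableOn.analyticOnNhd isOpen_univ
  have hder : AnalyticOnNhd ℂ (deriv (F11 q)) univ := han.deriv
  have hE0axis : ∀ y : ℝ, E11 q ((y:ℂ)*I) = 0 := by
    intro y
    have := hEbound11 q hq1 hq2' ((y:ℂ)*I)
    have h0 : ((y:ℂ)*I).re = 0 := by simp
    rw [h0] at this
    simpa using norm_le_zero_iff.1 (by simpa using this)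
  have hseq : Tendsto (fun k : ℕ => ((1/(k+1:ℝ) : ℝ):ℂ)*I) atTop (nhdsWithin 0 {(0:ℂ)}ᶜ) := by
    apply tendsto_nhdsWithin_of_tendsto_nhds_of_eventually_within
    · have h1 : Tendsto (fun k : ℕ => ((1/(k+1:ℝ) : ℝ):ℂ)) atTop (nhds ((0:ℝ):ℂ)) :=
        (Complex.continuous_ofReal.tendsto 0).comp tendsto_one_div_add_atTop_nhds_zero_nat
      simpa using h1.mul_const I
    · apply Eventually.of_forall
      intro k
      have h1 : (1/(k+1:ℝ)) ≠ 0 := by positivity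
      have h2 : (k+1:ℝ) ≠ 0 := by positivity
      simp [Complex.ext_iff, h1, h2]
  have hfreq : ∃ᶠ z in nhdsWithin 0 {(0:ℂ)}ᶜ, deriv (F11 q) z = 0 := by
    apply hseq.frequently
    apply Frequently.of_forall
    intro k
    rw [(hcore _).deriv]
    exact hE0axis _
  have hzero := hder.eqOn_zero_of_preconnected_of_frequently_eq_zero
    isPreconnected_univ (mem_univ 0) hfreq
  have hEzero : ∀ z : ℂ, E11 q z = 0 := fun z => by
    rw [← (hcore z).deriv]; exact hzero (mem_univ z)
  have hBzero : ∀ z : ℂ, B11 q z = 0 := by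
    intro z
    rcases le_or_gt z.re 0 with h|h
    · rw [← hEB11 q hq2' z h]; exact hEzero z
    · exact Bzero11 q hq2' z (le_of_lt h)
  have h1 : HasDerivAt (B11 q) (-(q w)) w := BhasDeriv11 q hq1 hq2 hq2' hq3 w hw
  have h2 : HasDerivAt (B11 q) 0 w := by
    have hBc : B11 q = fun _ => (0:ℂ) := funext hBzero
    rw [hBc]
    exact hasDerivAt_const w 0
  have h3 := h1.unique h2
  exact neg_eq_zero.1 h3

end Main

/-- Half-plane lemma: a holomorphic self-map of the left half plane has finite liminf
along some horizontal line. -/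
lemma halfplane11 (g : ℂ → ℂ) (hg : DifferentiableOn ℂ g {w : ℂ | w.re < 0})
    (hm : ∀ w : ℂ, w.re < 0 → (g w).re < 0) :
    ∃ t₀ : ℝ, ∃ x : ℕ → ℝ, (∀ k, x k < 0) ∧ Tendsto x atTop (nhds 0) ∧
      ∃ C : ℝ, ∀ k, ‖g ((x k : ℂ) + (t₀ : ℂ) * Complex.I)‖ ≤ C := by
  by_contra hcon
  push_neg at hcon
  have hblow : ∀ t : ℝ, Tendsto (fun x : ℝ => ‖g ((x:ℂ) + (t:ℂ)*I)‖)
      (nhdsWithin 0 (Iio 0)) atTop := by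
    intro t
    rw [tendsto_atTop]
    by_contra h2
    push_neg at h2
    obtain ⟨M, hM⟩ := h2
    have hfreq : ∃ᶠ (x : ℝ) in nhdsWithin (0:ℝ) (Iio 0), (‖g ((x:ℂ)+(t:ℂ)*I)‖ < M ∧ x < 0) := by
      apply Frequently.and_eventually
      · exact hM.mono (fun x hx => hx)
      · exact eventually_mem_nhdsWithin
    obtain ⟨u, hutend, hu⟩ := Filter.exists_seq_forall_of_frequently hfreq
    obtain ⟨k, hk⟩ := hcon t u (fun k => (hu k).2) (hutend.mono_right nhdsWithin_le_nhds) M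
    exact absurd hk (not_lt.2 (le_of_lt (hu k).1))
  set q : ℂ → ℂ := fun w => if w.re < 0 then 2/(g w - 1) else 0 with hqdef
  have hgne : ∀ w : ℂ, w.re < 0 → g w - 1 ≠ 0 := by
    intro w hw h
    have h1 : (g w).re < 0 := hm w hw
    rw [sub_eq_zero] at h
    rw [h] at h1
    simp only [Complex.one_re] at h1
    linarith
  have habs1 : ∀ w : ℂ, w.re < 0 → (1:ℝ) ≤ ‖g w - 1‖ := by
    intro w hw
    have h1 : (g w).re < 0 := hm w hw
    calc (1:ℝ) ≤ |(g w - 1).re| := by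
          rw [Complex.sub_re, Complex.one_re, abs_of_nonpos (by linarith)]
          linarith
      _ ≤ ‖g w - 1‖ := Complex.abs_re_le_norm _
  have hq1 : ∀ w, ‖q w‖ ≤ 2 := by
    intro w
    by_cases h : w.re < 0
    · rw [hqdef]
      simp only [if_pos h]
      have hb := habs1 w h
      have hbpos : (0:ℝ) < ‖g w - 1‖ := lt_of_lt_of_le one_pos hb
      rw [norm_div, div_le_iff₀ hbpos]
      have h2 : ‖(2:ℂ)‖ = 2 := by norm_num
      nlinarith
    · simp [hqdef, if_neg h]
  have hq2 : DifferentiableOn ℂ q {w : ℂ | w.re < 0} := by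
    have hd : DifferentiableOn ℂ (fun w => 2/(g w - 1)) {w : ℂ | w.re < 0} :=
      (differentiableOn_const 2).div (hg.sub (differentiableOn_const 1))
        (fun w hw => hgne w hw)
    apply hd.congr
    intro w hw
    rw [hqdef]
    exact if_pos hw
  have hq2' : ∀ w : ℂ, ¬ w.re < 0 → q w = 0 := by
    intro w hw
    simp [hqdef, if_neg hw]
  have hq3 : ∀ t : ℝ, Tendsto (fun x : ℝ => q ((x:ℂ) + (t:ℂ)*I))
      (nhdsWithin 0 (Iio 0)) (nhds 0) := by
    intro t
    rw [tendsto_zero_iff_norm_tendsto_zero]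
    have hev : ∀ᶠ (x : ℝ) in nhdsWithin (0:ℝ) (Iio 0), (2:ℝ) ≤ ‖g ((x:ℂ)+(t:ℂ)*I)‖ :=
      (hblow t).eventually_ge_atTop 2
    have hev2 : ∀ᶠ x in nhdsWithin (0:ℝ) (Iio 0), x < 0 := eventually_mem_nhdsWithin
    apply squeeze_zero' (Eventually.of_forall fun x => norm_nonneg _)
      (g := fun x : ℝ => 2/(‖g ((x:ℂ)+(t:ℂ)*I)‖ - 1))
    · filter_upwards [hev, hev2] with x hx hx0
      have hre : ((x:ℂ)+(t:ℂ)*I).re < 0 := by rw [coordre11]; exact hx0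
      rw [hqdef]
      simp only [if_pos hre]
      rw [norm_div]
      have h1 : ‖g ((x:ℂ)+(t:ℂ)*I)‖ - 1 ≤ ‖g ((x:ℂ)+(t:ℂ)*I) - 1‖ := by
        have := norm_sub_norm_le (g ((x:ℂ)+(t:ℂ)*I)) (1:ℂ)
        simp only [norm_one] at this
        linarith
      have h2 : (0:ℝ) < ‖g ((x:ℂ)+(t:ℂ)*I)‖ - 1 := by linarith
      have h3 : ‖(2:ℂ)‖ = 2 := by norm_num
      rw [h3]
      exact div_le_div_of_nonneg_left (by norm_num) h2 h1
    · apply Tendsto.div_atTop tendsto_const_nhds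
      have := tendsto_atTop_add_const_right (nhdsWithin (0:ℝ) (Iio 0)) (-1) (hblow t)
      simpa [sub_eq_add_neg] using this
  have hkey := key11 q hq1 hq2 hq2' hq3 (-1 : ℂ) (by norm_num)
  rw [hqdef] at hkey
  simp only [if_pos (by norm_num : ((-1:ℂ)).re < 0)] at hkey
  rcases div_eq_zero_iff.1 hkey with h|h
  · norm_num at h
  · exact hgne (-1) (by norm_num) h

/-- If `ψ` is a biholomorphism from `M_P = {Re w + P(z) < 0}` (with
`P` continuous, `P(0)=0`) onto the Siegel half-space `𝒰`, then for some `t₀ ∈ ℝ` the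
liminf of `‖ψ(0', x + it₀)‖` as `x → 0⁻` is finite: there is a sequence of negative reals
`x_k → 0` along which `ψ(0', x_k + it₀)` stays bounded. -/
theorem stmt_11 (n : ℕ) (P : (Fin n → ℂ) → ℝ) (hPcont : Continuous P) (hP0 : P 0 = 0)
    (MP U : Set ((Fin n → ℂ) × ℂ))
    (hMP : MP = {p | p.2.re + P p.1 < 0})
    (hU : U = {p | p.2.re + ∑ j, ‖p.1 j‖ ^ 2 < 0})
    (ψ : (Fin n → ℂ) × ℂ → (Fin n → ℂ) × ℂ)
    (hψdiff : DifferentiableOn ℂ ψ MP) (hψbij : Set.BijOn ψ MP U)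
    (hψinv : ∃ χ : (Fin n → ℂ) × ℂ → (Fin n → ℂ) × ℂ,
      DifferentiableOn ℂ χ U ∧ Set.InvOn χ ψ MP U) :
    ∃ t₀ : ℝ, ∃ x : ℕ → ℝ, (∀ k, x k < 0) ∧ Tendsto x atTop (nhds 0) ∧
      ∃ C : ℝ, ∀ k, ‖ψ ((0 : Fin n → ℂ), (x k : ℂ) + (t₀ : ℂ) * Complex.I)‖ ≤ C := by
  set g : ℂ → ℂ := fun w => (ψ ((0 : Fin n → ℂ), w)).2 with hgdef
  have hslice : ∀ w : ℂ, w.re < 0 → ((0 : Fin n → ℂ), w) ∈ MP := by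
    intro w hw
    rw [hMP]
    simp only [Set.mem_setOf_eq, hP0]
    simpa using hw
  have hgd : DifferentiableOn ℂ g {w : ℂ | w.re < 0} := by
    have hinner : Differentiable ℂ (fun w : ℂ => ((0 : Fin n → ℂ), w)) :=
      (differentiable_const _).prodMk differentiable_id
    have hcomp : DifferentiableOn ℂ (fun w : ℂ => ψ ((0:Fin n→ℂ), w)) {w : ℂ | w.re < 0} :=
      hψdiff.comp hinner.differentiableOn (fun w hw => hslice w hw)
    exact differentiable_snd.comp_differentiableOn hcomp
  have hgm : ∀ w : ℂ, w.re < 0 → (g w).re < 0 := by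
    intro w hw
    have hU' := hψbij.mapsTo (hslice w hw)
    rw [hU] at hU'
    have h1 : (ψ ((0:Fin n→ℂ), w)).2.re + ∑ j, ‖(ψ ((0:Fin n→ℂ), w)).1 j‖^2 < 0 := hU'
    have hsum : 0 ≤ ∑ j, ‖(ψ ((0:Fin n→ℂ), w)).1 j‖^2 :=
      Finset.sum_nonneg fun j _ => sq_nonneg _
    have : (g w).re = (ψ ((0:Fin n→ℂ), w)).2.re := rfl
    rw [this]
    linarith
  obtain ⟨t₀, x, hneg, hlim, C, hC⟩ := halfplane11 g hgd hgm
  refine ⟨t₀, x, hneg, hlim, max C (Real.sqrt C), ?_⟩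
  intro k
  have hC0 : 0 ≤ C := le_trans (norm_nonneg _) (hC 0)
  have hwre : ((x k : ℂ) + (t₀:ℂ)*Complex.I).re < 0 := by
    rw [coordre11]; exact hneg k
  have hmem := hψbij.mapsTo (hslice _ hwre)
  rw [hU] at hmem
  set p := ψ ((0:Fin n→ℂ), (x k : ℂ) + (t₀:ℂ)*Complex.I) with hp
  have hmem' : p.2.re + ∑ j, ‖p.1 j‖^2 < 0 := hmem
  have hCk : ‖p.2‖ ≤ C := hC k
  have hren : -(p.2.re) ≤ C := by
    have h1 : |p.2.re| ≤ ‖p.2‖ := Complex.abs_re_le_norm _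
    have h2 : -(p.2.re) ≤ |p.2.re| := neg_le_abs _
    have h3 : ‖p.2‖ = ‖p.2‖ := rfl
    linarith
  have hj : ∀ j, ‖p.1 j‖ ≤ Real.sqrt C := by
    intro j
    have h1 : ‖p.1 j‖^2 ≤ ∑ i, ‖p.1 i‖^2 :=
      Finset.single_le_sum (f := fun i => ‖p.1 i‖^2)
        (fun i _ => sq_nonneg _) (Finset.mem_univ j)
    have h2 : ‖p.1 j‖^2 ≤ C := by linarith
    calc ‖p.1 j‖ = Real.sqrt (‖p.1 j‖^2) := by
          rw [Real.sqrt_sq (norm_nonneg _)]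
      _ ≤ Real.sqrt C := Real.sqrt_le_sqrt h2
  rw [show ‖ψ ((0 : Fin n → ℂ), (x k : ℂ) + (t₀ : ℂ) * Complex.I)‖ = ‖p‖ from rfl,
    Prod.norm_def]
  apply max_le
  · exact le_trans ((pi_norm_le_iff_of_nonneg (Real.sqrt_nonneg C)).2 hj) (le_max_right _ _)
  · exact le_trans hCk (le_max_left _ _)
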